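/- arXiv:2203.03327 — 2 statements merged into one kernel-verified Lean document; each statement's English description precedes it below -/
import Mathlib

section
/- Let n > 3f and let x, y : Fin n → ℝ be two vectors that agree on at least n − f coordinates, and suppose all entries of both vectors lie in an interval [a,b]. Define FTA(v) = mean(select_f(reduce_f(v))), where reduce_f discards the f largest and f smallest entries and select_f keeps every f-th element of the remaining sorted list. Then |FTA(x) − FTA(y)| ≤ (b − a)/c, where c = ⌊(n − 2f − 1)/f⌋ + 1. -/
/-- The entries of `v` in nondecreasing order. -/
noncomputable def sortedOf (n : ℕ) (v : Fin n → ℝ) : List ℝ :=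
  (List.ofFn v).mergeSort (· ≤ ·)

/-- `reduce_f`: discard the `f` smallest and `f` largest entries of the sorted list. -/
def reduceF (f : ℕ) (l : List ℝ) : List ℝ :=
  (l.drop f).take (l.length - 2 * f)

/-- `select_f`: keep every `f`-th element of the (sorted) list. -/
def selectF (f : ℕ) (l : List ℝ) : List ℝ :=
  (List.range ((l.length - 1) / f + 1)).map fun j => l.getD (j * f) 0

/-- The fault-tolerant averaging function `FTA(v) = mean(select_f(reduce_f(v)))`. -/
noncomputable def FTA (n f : ℕ) (v : Fin n → ℝ) : ℝ :=
  let l := selectF f (reduceF f (sortedOf n v))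
  l.sum / l.length

/- ### Auxiliary lemmas -/

lemma sortedOf_sorted (n : ℕ) (v : Fin n → ℝ) : (sortedOf n v).Pairwise (· ≤ ·) := by
  have h := List.pairwise_mergeSort (le := fun a b : ℝ => decide (a ≤ b))
    (fun a b c hab hbc => by simp at *; exact le_trans hab hbc)
    (fun a b => by simp [le_total]) (List.ofFn v)
  exact List.Pairwise.imp (fun hab => of_decide_eq_true hab) h

lemma sortedOf_perm (n : ℕ) (v : Fin n → ℝ) : (sortedOf n v).Perm (List.ofFn v) :=
  List.mergeSort_perm _ _

lemma sortedOf_length (n : ℕ) (v : Fin n → ℝ) : (sortedOf n v).length = n := by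
  rw [sortedOf, List.length_mergeSort, List.length_ofFn]

lemma sorted_getElem_le {L : List ℝ} (hL : L.Pairwise (· ≤ ·)) {i j : ℕ}
    (hij : i ≤ j) (hj : j < L.length) : L[i]'(lt_of_le_of_lt hij hj) ≤ L[j] := by
  rcases eq_or_lt_of_le hij with rfl | h
  · exact le_rfl
  · exact List.pairwise_iff_getElem.mp hL i j _ hj h

/-- Lemma A: in a sorted list, at least `k+1` elements are `≤ L[k]`. -/
lemma countA {L : List ℝ} (hL : L.Pairwise (· ≤ ·)) {k : ℕ} (hk : k < L.length) :
    k + 1 ≤ L.countP (fun z => decide (z ≤ L[k])) := by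
  set t := L[k] with ht
  conv_rhs => rw [← List.take_append_drop (k+1) L]
  rw [List.countP_append]
  have h1 : (L.take (k+1)).countP (fun z => decide (z ≤ t)) = (L.take (k+1)).length := by
    rw [List.countP_eq_length]
    intro a ha
    rw [List.mem_iff_getElem] at ha
    obtain ⟨i, hi, rfl⟩ := ha
    have hi' : i < L.length := lt_of_lt_of_le hi (by simpa using List.length_take_le (k+1) L)
    have hik : i ≤ k := by
      have := hi
      simp only [List.length_take] at this
      omega
    rw [List.getElem_take]
    rw [ht]
    exact decide_eq_true (sorted_getElem_le hL hik hk)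
  rw [h1, List.length_take]
  omega

/-- Lemma B: if at least `k+1` elements of a sorted list are `≤ t`, then `L[k] ≤ t`. -/
lemma countB {L : List ℝ} (hL : L.Pairwise (· ≤ ·)) {k : ℕ} (hk : k < L.length) {t : ℝ}
    (h : k + 1 ≤ L.countP (fun z => decide (z ≤ t))) : L[k] ≤ t := by
  by_contra hc
  push_neg at hc
  have hsplit : L.countP (fun z => decide (z ≤ t)) =
      (L.take k).countP (fun z => decide (z ≤ t)) +
      (L.drop k).countP (fun z => decide (z ≤ t)) := by
    conv_lhs => rw [← List.take_append_drop k L]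
    rw [List.countP_append]
  have h2 : (L.drop k).countP (fun z => decide (z ≤ t)) = 0 := by
    rw [List.countP_eq_zero]
    intro a ha
    rw [List.mem_iff_getElem] at ha
    obtain ⟨i, hi, rfl⟩ := ha
    rw [List.getElem_drop]
    have hlt : k + i < L.length := by
      rw [List.length_drop] at hi; omega
    have : L[k] ≤ L[k+i] := sorted_getElem_le hL (Nat.le_add_right k i) hlt
    simp only [decide_eq_true_eq]
    push_neg
    exact lt_of_lt_of_le hc this
  have h3 : (L.take k).countP (fun z => decide (z ≤ t)) ≤ k := by
    calc (L.take k).countP _ ≤ (L.take k).length := List.countP_le_length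
    _ ≤ k := by simp [List.length_take]
  omega

lemma aux_len {α : Type*} (q : α → Bool) (l : List α) :
    (l.filter q).length = (l.map fun a => if q a then (1:ℕ) else 0).sum := by
  induction l with
  | nil => simp
  | cons a t ih => by_cases h : q a <;> simp [List.filter_cons, h, ih] <;> omega

lemma countP_ofFn (p : ℝ → Bool) (n : ℕ) (x : Fin n → ℝ) :
    (List.ofFn x).countP p = (Finset.univ.filter fun i => p (x i)).card := by
  rw [List.ofFn_eq_map, List.countP_map, List.countP_eq_length_filter]
  rw [Finset.card_filter, Finset.sum, Fin.univ_def]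
  show _ = (Multiset.map _ (↑(List.finRange n) : Multiset (Fin n))).sum
  rw [Multiset.map_coe, Multiset.sum_coe]
  exact aux_len _ _

lemma countP_ofFn_le (n : ℕ) (x : Fin n → ℝ) (t : ℝ) :
    (List.ofFn x).countP (fun z => decide (z ≤ t)) =
      (Finset.univ.filter fun i => x i ≤ t).card := by
  rw [countP_ofFn]
  congr 1
  simp

lemma sum_list_range (c : ℕ) (g : ℕ → ℝ) :
    ((List.range c).map g).sum = ∑ j ∈ Finset.range c, g j := by
  rw [Finset.sum, Finset.range]
  show _ = (Multiset.map _ (↑(List.range c) : Multiset ℕ)).sum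
  rw [Multiset.map_coe, Multiset.sum_coe]

/-- The rank lemma: the `j`-th smallest value of `y` is at most the `(j+f)`-th
smallest value of `x` when `x` and `y` agree off a set of `f` coordinates. -/
lemma rank_lemma (n f : ℕ) (x y : Fin n → ℝ) (I : Finset (Fin n))
    (hI : n - f ≤ I.card) (hxy : ∀ i ∈ I, x i = y i) (hfn : f ≤ n)
    {j : ℕ} (hj : j + f < n) :
    (sortedOf n y).getD j 0 ≤ (sortedOf n x).getD (j + f) 0 := by
  have hlx := sortedOf_length n x
  have hly := sortedOf_length n y
  have hjx : j + f < (sortedOf n x).length := by omega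
  have hjy : j < (sortedOf n y).length := by omega
  rw [List.getD_eq_getElem _ _ hjy, List.getD_eq_getElem _ _ hjx]
  set t := (sortedOf n x)[j+f] with ht
  -- count of x-entries ≤ t is at least j+f+1
  have hcx : j + f + 1 ≤ (sortedOf n x).countP (fun z => decide (z ≤ t)) :=
    countA (sortedOf_sorted n x) hjx
  have hSx : j + f + 1 ≤ (Finset.univ.filter fun i => x i ≤ t).card := by
    rw [← countP_ofFn_le]
    calc j + f + 1 ≤ _ := hcx
    _ = _ := ((sortedOf_perm n x).countP_eq _)
  set S := Finset.univ.filter fun i => x i ≤ t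
  set T := Finset.univ.filter fun i => y i ≤ t
  have hST : S ∩ I ⊆ T := by
    intro i hi
    rw [Finset.mem_inter] at hi
    obtain ⟨hiS, hiI⟩ := hi
    simp only [S, T, Finset.mem_filter, Finset.mem_univ, true_and] at hiS ⊢
    rw [← hxy i hiI]; exact hiS
  have hcard : j + 1 ≤ (S ∩ I).card := by
    have h1 := Finset.card_union_add_card_inter S I
    have h2 : (S ∪ I).card ≤ n := by
      simpa using Finset.card_le_univ (S ∪ I)
    omega
  have hT : j + 1 ≤ T.card := le_trans hcard (Finset.card_le_card hST)
  have hcy : j + 1 ≤ (sortedOf n y).countP (fun z => decide (z ≤ t)) := by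
    calc j + 1 ≤ T.card := hT
    _ = (List.ofFn y).countP _ := (countP_ofFn_le n y t).symm
    _ = _ := ((sortedOf_perm n y).countP_eq _).symm
  exact countB (sortedOf_sorted n y) hjy hcy

lemma mem_sortedOf_bounds {n : ℕ} {v : Fin n → ℝ} {a b : ℝ}
    (hv : ∀ i, v i ∈ Set.Icc a b) {z : ℝ} (hz : z ∈ sortedOf n v) :
    a ≤ z ∧ z ≤ b := by
  have := (sortedOf_perm n v).mem_iff.mp hz
  rw [List.mem_ofFn] at this
  obtain ⟨i, rfl⟩ := this
  exact ⟨(hv i).1, (hv i).2⟩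

/-- Convergence property of the fault-tolerant averaging function: if `n > 3f`,
`x` and `y` agree on at least `n - f` coordinates and all entries of both lie in
`[a, b]`, then `|FTA x - FTA y| ≤ (b-a)/c` with `c = ⌊(n-2f-1)/f⌋ + 1`. -/
theorem FTA_contraction (n f : ℕ) (hf : 1 ≤ f) (hn : n > 3 * f)
    (x y : Fin n → ℝ) (a b : ℝ)
    (hI : ∃ I : Finset (Fin n), n - f ≤ I.card ∧ ∀ i ∈ I, x i = y i)
    (hx : ∀ i, x i ∈ Set.Icc a b) (hy : ∀ i, y i ∈ Set.Icc a b) :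
    |FTA n f x - FTA n f y| ≤ (b - a) / (((n - 2 * f - 1) / f + 1 : ℕ) : ℝ) := by
  obtain ⟨I, hIc, hIxy⟩ := hI
  have hfn : f ≤ n := by omega
  set m : ℕ := n - 2 * f with hm
  set c : ℕ := (m - 1) / f + 1 with hc
  have hm2 : f + 1 ≤ m := by omega
  -- the key index bound
  have hdiv : (c - 1) * f ≤ m - 1 := by
    rw [hc]; simpa using Nat.div_mul_le_self (m - 1) f
  have hcpos : 1 ≤ c := by rw [hc]; exact Nat.le_add_left 1 _
  -- lengths
  have lenR : ∀ v : Fin n → ℝ, (reduceF f (sortedOf n v)).length = m := by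
    intro v
    rw [reduceF, List.length_take, List.length_drop, sortedOf_length]
    omega
  have lenS : ∀ v : Fin n → ℝ, (selectF f (reduceF f (sortedOf n v))).length = c := by
    intro v
    rw [selectF, List.length_map, List.length_range, lenR]
  -- the selected entries
  have hsel : ∀ (v : Fin n → ℝ) (j : ℕ), j < c →
      (reduceF f (sortedOf n v)).getD (j * f) 0 = (sortedOf n v).getD (f + j * f) 0 := by
    intro v j hj
    have hjf : j * f ≤ m - 1 := by
      calc j * f ≤ (c - 1) * f := Nat.mul_le_mul_right f (Nat.le_pred_of_lt hj)
      _ ≤ m - 1 := hdiv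
    have h1 : j * f < (reduceF f (sortedOf n v)).length := by rw [lenR]; omega
    have h2 : f + j * f < (sortedOf n v).length := by rw [sortedOf_length]; omega
    rw [List.getD_eq_getElem _ _ h1, List.getD_eq_getElem _ _ h2]
    simp only [reduceF]
    rw [List.getElem_take, List.getElem_drop]
  have hselect : ∀ v : Fin n → ℝ, selectF f (reduceF f (sortedOf n v)) =
      (List.range c).map fun j => (reduceF f (sortedOf n v)).getD (j * f) 0 := by
    intro v
    rw [selectF, lenR]
  -- sums
  set sx : ℕ → ℝ := fun j => (sortedOf n x).getD (f + j * f) 0 with hsx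
  set sy : ℕ → ℝ := fun j => (sortedOf n y).getD (f + j * f) 0 with hsy
  have hsumx : (selectF f (reduceF f (sortedOf n x))).sum = ∑ j ∈ Finset.range c, sx j := by
    rw [hselect, sum_list_range]
    exact Finset.sum_congr rfl fun j hj => hsel x j (Finset.mem_range.mp hj)
  have hsumy : (selectF f (reduceF f (sortedOf n y))).sum = ∑ j ∈ Finset.range c, sy j := by
    rw [hselect, sum_list_range]
    exact Finset.sum_congr rfl fun j hj => hsel y j (Finset.mem_range.mp hj)
  -- bounds on individual entries
  have hmemX : ∀ j : ℕ, j < c → a ≤ sx j ∧ sx j ≤ b := by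
    intro j hj
    have hjf : j * f ≤ m - 1 := by
      calc j * f ≤ (c - 1) * f := Nat.mul_le_mul_right f (Nat.le_pred_of_lt hj)
      _ ≤ m - 1 := hdiv
    have h2 : f + j * f < (sortedOf n x).length := by rw [sortedOf_length]; omega
    rw [hsx]
    simp only
    rw [List.getD_eq_getElem _ _ h2]
    exact mem_sortedOf_bounds hx (List.getElem_mem h2)
  have hmemY : ∀ j : ℕ, j < c → a ≤ sy j ∧ sy j ≤ b := by
    intro j hj
    have hjf : j * f ≤ m - 1 := by
      calc j * f ≤ (c - 1) * f := Nat.mul_le_mul_right f (Nat.le_pred_of_lt hj)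
      _ ≤ m - 1 := hdiv
    have h2 : f + j * f < (sortedOf n y).length := by rw [sortedOf_length]; omega
    rw [hsy]
    simp only
    rw [List.getD_eq_getElem _ _ h2]
    exact mem_sortedOf_bounds hy (List.getElem_mem h2)
  -- interleaving: sx j ≤ sy (j+1) and sy j ≤ sx (j+1) for j < c - 1
  have hint : ∀ j : ℕ, j < c - 1 → sx j ≤ sy (j + 1) ∧ sy j ≤ sx (j + 1) := by
    intro j hj
    have hjf : (j + 1) * f ≤ m - 1 := by
      calc (j + 1) * f ≤ (c - 1) * f := Nat.mul_le_mul_right f hj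
      _ ≤ m - 1 := hdiv
    have hjj : j * f + f ≤ m - 1 := by
      have := hjf
      rw [Nat.add_mul] at this
      omega
    have harg : (f + j * f) + f < n := by omega
    constructor
    · have h1 := rank_lemma n f y x I hIc (fun i hi => (hIxy i hi).symm) hfn harg
      have : f + j * f + f = f + (j + 1) * f := by ring
      rw [this] at h1
      exact h1
    · have h1 := rank_lemma n f x y I hIc hIxy hfn harg
      have : f + j * f + f = f + (j + 1) * f := by ring
      rw [this] at h1
      exact h1
  -- sum comparison
  have key : ∀ (u w : ℕ → ℝ), (∀ j, j < c → a ≤ u j ∧ u j ≤ b) →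
      (∀ j, j < c → a ≤ w j ∧ w j ≤ b) →
      (∀ j, j < c - 1 → u j ≤ w (j + 1)) →
      ∑ j ∈ Finset.range c, u j - ∑ j ∈ Finset.range c, w j ≤ b - a := by
    intro u w hu hw huw
    have hc1 : c = (c - 1) + 1 := (Nat.sub_add_cancel hcpos).symm
    have hU : ∑ j ∈ Finset.range c, u j =
        (∑ j ∈ Finset.range (c-1), u j) + u (c - 1) := by
      conv_lhs => rw [hc1, Finset.sum_range_succ]
    have hW : ∑ j ∈ Finset.range c, w j =
        (∑ j ∈ Finset.range (c-1), w (j + 1)) + w 0 := by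
      conv_lhs => rw [hc1, Finset.sum_range_succ']
    have hsums : ∑ j ∈ Finset.range (c-1), u j ≤ ∑ j ∈ Finset.range (c-1), w (j+1) :=
      Finset.sum_le_sum fun j hj => huw j (Finset.mem_range.mp hj)
    have h1 : u (c - 1) ≤ b := (hu (c-1) (Nat.sub_lt hcpos one_pos)).2
    have h2 : a ≤ w 0 := (hw 0 hcpos).1
    linarith
  have hxy1 : ∑ j ∈ Finset.range c, sx j - ∑ j ∈ Finset.range c, sy j ≤ b - a :=
    key sx sy hmemX hmemY (fun j hj => (hint j hj).1)
  have hxy2 : ∑ j ∈ Finset.range c, sy j - ∑ j ∈ Finset.range c, sx j ≤ b - a :=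
    key sy sx hmemY hmemX (fun j hj => (hint j hj).2)
  -- conclude
  have hcR : (0:ℝ) < (c:ℝ) := by exact_mod_cast hcpos
  simp only [FTA]
  rw [hsumx, hsumy, lenS, lenS]
  rw [div_sub_div_same, abs_div, abs_of_pos hcR]
  gcongr
  rw [abs_sub_le_iff]
  exact ⟨hxy1, hxy2⟩
end

section
/- Let n > 3f, let I ⊆ Fin n with |I| ≥ n − f, and let v : Fin n → ℝ with v i ∈ [a,b] for all i ∈ I (entries outside I arbitrary reals). Then after removing the f largest and f smallest entries of v, all remaining entries lie in [a,b]. -/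
private lemma countP_ofFn_aux (n : ℕ) (v : Fin n → ℝ) (p : ℝ → Bool) :
    (List.ofFn v).countP p = (Finset.univ.filter (fun i => p (v i))).card := by
  rw [List.ofFn_eq_map, List.countP_map, List.countP_eq_length_filter]
  rw [Fin.univ_def, Finset.filter]
  simp [Multiset.filter_coe]
  rfl

/-- If `n > 3f`, `|I| ≥ n - f`, and `v i ∈ [a,b]` for all `i ∈ I`, then after
removing the `f` largest and `f` smallest entries of `v`, all remaining entries
lie in `[a, b]`. -/
theorem reduceF_mem_Icc (n f : ℕ) (hn : n > 3 * f)
    (I : Finset (Fin n)) (hI : n - f ≤ I.card)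
    (v : Fin n → ℝ) (a b : ℝ) (hv : ∀ i ∈ I, v i ∈ Set.Icc a b) :
    ∀ z ∈ reduceF f (sortedOf n v), z ∈ Set.Icc a b := by
  intro z hz
  set l := sortedOf n v with hldef
  have hperm : l.Perm (List.ofFn v) := List.mergeSort_perm _ _
  have hlen : l.length = n := by rw [hperm.length_eq, List.length_ofFn]
  have hsort : l.Pairwise (· ≤ ·) := by
    have h := List.pairwise_mergeSort (le := fun x y : ℝ => decide (x ≤ y))
      (by intro x y c; simpa using le_trans) (by intro x y; simpa using le_total x y)
      (List.ofFn v)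
    exact h.imp (by simp)
  -- bad-count bounds
  have hcompl : (Iᶜ : Finset (Fin n)).card ≤ f := by
    rw [Finset.card_compl]
    simp only [Fintype.card_fin]
    omega
  have hcount : ∀ p : ℝ → Bool, (∀ i ∈ I, p (v i) = false) → l.countP p ≤ f := by
    intro p hp
    rw [hperm.countP_eq, countP_ofFn_aux]
    refine le_trans (Finset.card_le_card ?_) hcompl
    intro i hi
    simp only [Finset.mem_filter] at hi
    simp only [Finset.mem_compl]
    intro hiI
    exact absurd hi.2 (by simp [hp i hiI])
  have hca : l.countP (fun x => decide (x < a)) ≤ f :=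
    hcount _ (fun i hi => by simpa using not_lt.2 (hv i hi).1)
  have hcb : l.countP (fun x => decide (b < x)) ≤ f :=
    hcount _ (fun i hi => by simpa using not_lt.2 (hv i hi).2)
  -- get the index of z
  rw [reduceF, List.mem_take_iff_getElem] at hz
  obtain ⟨i, him, hiz⟩ := hz
  have him' : i < (l.drop f).length := lt_of_lt_of_le him inf_le_right
  have hidx : f + i < n - f := by
    have h1 : i < l.length - 2 * f := lt_of_lt_of_le him inf_le_left
    have h2 : i < l.length - f := by simpa using him'
    omega
  have hzget : z = l[f + i]'(by omega) := by
    rw [← hiz, List.getElem_drop]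
  constructor
  · by_contra h
    push_neg at h
    have hall : ∀ x ∈ l.take (f + i + 1), (fun x => decide (x < a)) x = true := by
      intro x hx
      rw [List.mem_take_iff_getElem] at hx
      obtain ⟨j, hjm, hjx⟩ := hx
      have hj : j ≤ f + i := by
        have := lt_of_lt_of_le hjm inf_le_left; omega
      have hjl : j < l.length := by omega
      have : l.get ⟨j, hjl⟩ ≤ l.get ⟨f + i, by omega⟩ :=
        hsort.rel_get_of_le (by simpa using hj)
      simp only [List.get_eq_getElem] at this
      rw [← hjx]
      simp only [decide_eq_true_eq]
      exact lt_of_le_of_lt this (hzget ▸ h)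
    have hcnt : (l.take (f + i + 1)).countP (fun x => decide (x < a)) = f + i + 1 := by
      rw [List.countP_eq_length.2 hall, List.length_take]
      omega
    have := (List.take_sublist (f + i + 1) l).countP_le (p := fun x => decide (x < a))
    omega
  · by_contra h
    push_neg at h
    have hall : ∀ x ∈ l.drop (f + i), (fun x => decide (b < x)) x = true := by
      intro x hx
      rw [List.mem_iff_getElem] at hx
      obtain ⟨j, hjm, hjx⟩ := hx
      have hjl : f + i + j < l.length := by
        have : j < l.length - (f + i) := by simpa using hjm
        omega
      have : l.get ⟨f + i, by omega⟩ ≤ l.get ⟨f + i + j, hjl⟩ :=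
        hsort.rel_get_of_le (by simp)
      simp only [List.get_eq_getElem] at this
      rw [← hjx, List.getElem_drop]
      simp only [decide_eq_true_eq]
      exact lt_of_lt_of_le (hzget ▸ h) this
    have hcnt : (l.drop (f + i)).countP (fun x => decide (b < x)) = l.length - (f + i) := by
      rw [List.countP_eq_length.2 hall, List.length_drop]
    have := (List.drop_sublist (f + i) l).countP_le (p := fun x => decide (b < x))
    omega
end
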